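/- (Optimal order for single-instance computation of Boolean threshold functions.) Let 0 ≤ p_1 ≤ p_2 ≤ … ≤ p_n ≤ 1 and 1 ≤ θ ≤ n, and take the constant cost f ≡ 1 (each transmission costs one bit). Then the index i = n−θ+1 attains the minimum in the recursion: for every j ∈ {1,…,n}, 1 + p_{n−θ+1}·C(θ−1; p_{−(n−θ+1)}) + (1−p_{n−θ+1})·C(θ; p_{−(n−θ+1)}) ≤ 1 + p_j·C(θ−1; p_{−j}) + (1−p_j)·C(θ; p_{−j}), where C = C_f with f ≡ 1. In other words, to compute Π_{n−k}(X_1,…,X_n) it is optimal for node k+1 to transmit its bit first. -/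

import Mathlib

/-- The optimal expected cost `C_f(θ; p)` of sequentially computing the Boolean
threshold function `Π_θ` on independent Bernoulli variables with parameters given by
the list `p`, where querying a node with parameter `q` costs `f q`.
`cost f θ p = 0` if `θ = 0` or `θ > p.length`, and otherwise it is the minimum over
nodes `i` of `f p_i + p_i • cost f (θ-1) p_{-i} + (1 - p_i) • cost f θ p_{-i}`. -/
noncomputable def cost (f : ℝ → ℝ) : ℕ → List ℝ → ℝ
  | 0, _ => 0
  | (θ+1), p =>
      if p.length < θ + 1 then 0
      else ⨅ i : Fin p.length,
        (f (p.get i) + p.get i * cost f θ (p.eraseIdx i.1)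
          + (1 - p.get i) * cost f (θ+1) (p.eraseIdx i.1))
termination_by θ p => p.length
decreasing_by
  all_goals (have h := i.isLt; simp [List.length_eraseIdx, h]; omega)

noncomputable def FF : ℕ → List ℝ → ℝ
  | 0, _ => 0
  | (t+1), p =>
      if h : p.length < t + 1 then 0
      else 1 + p.getD (p.length - (t+1)) 0 * FF t (p.eraseIdx (p.length - (t+1)))
             + (1 - p.getD (p.length - (t+1)) 0) * FF (t+1) (p.eraseIdx (p.length - (t+1)))
termination_by t p => p.length
decreasing_by
  all_goals (have hp : 0 < p.length := by omega
             simp [List.length_eraseIdx, hp])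

@[simp] lemma FF_zero (p : List ℝ) : FF 0 p = 0 := by rw [FF]

lemma FF_of_lt (t : ℕ) (p : List ℝ) (h : p.length < t + 1) : FF (t+1) p = 0 := by
  rw [FF, dif_pos h]

lemma FF_succ (t : ℕ) (p : List ℝ) (h : ¬ p.length < t + 1) :
    FF (t+1) p = 1 + p.getD (p.length - (t+1)) 0 * FF t (p.eraseIdx (p.length - (t+1)))
             + (1 - p.getD (p.length - (t+1)) 0) * FF (t+1) (p.eraseIdx (p.length - (t+1))) := by
  rw [FF, dif_neg h]

-- list helpers
lemma getD_mid (A : List ℝ) (x : ℝ) (B : List ℝ) : (A ++ x :: B).getD A.length 0 = x := by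
  induction A with
  | nil => simp
  | cons a A ih => simpa using ih

lemma erase_mid (A : List ℝ) (x : ℝ) (B : List ℝ) : (A ++ x :: B).eraseIdx A.length = A ++ B := by
  induction A with
  | nil => simp
  | cons a A ih => simpa using ih

lemma FF_mid (t : ℕ) (A : List ℝ) (x : ℝ) (B : List ℝ) (ht : t = B.length) :
    FF (t+1) (A ++ x :: B) = 1 + x * FF t (A ++ B) + (1 - x) * FF (t+1) (A ++ B) := by
  have hlen : (A ++ x :: B).length = A.length + B.length + 1 := by simp; omega
  have hnl : ¬ (A ++ x :: B).length < t + 1 := by omega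
  have hk : (A ++ x :: B).length - (t+1) = A.length := by omega
  rw [FF_succ t _ hnl, hk, getD_mid, erase_mid]

def Ok (l : List ℝ) : Prop := ∀ x ∈ l, 0 ≤ x ∧ x ≤ 1

lemma Ok_sublist {l l' : List ℝ} (h : Ok l) (hs : List.Sublist l' l) : Ok l' :=
  fun x hx => h x (hs.mem hx)

lemma Ok_append_left {A B : List ℝ} (h : Ok (A ++ B)) : Ok A :=
  Ok_sublist h (List.sublist_append_left A B)

lemma Ok_append_right {A B : List ℝ} (h : Ok (A ++ B)) : Ok B :=
  Ok_sublist h (List.sublist_append_right A B)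

lemma Ok_getD {l : List ℝ} (h : Ok l) (k : ℕ) (hk : k < l.length) :
    0 ≤ l.getD k 0 ∧ l.getD k 0 ≤ 1 := by
  rw [List.getD_eq_getElem l 0 hk]
  exact h _ (List.getElem_mem hk)

lemma FF_nonneg : ∀ (N t : ℕ) (p : List ℝ), p.length ≤ N → Ok p → 0 ≤ FF t p := by
  intro N
  induction N with
  | zero =>
    intro t p hN hp
    match t with
    | 0 => simp
    | (t+1) => rw [FF_of_lt]; omega
  | succ N ih =>
    intro t p hN hp
    match t with
    | 0 => simp
    | (t+1) =>
      by_cases h : p.length < t + 1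
      · rw [FF_of_lt _ _ h]
      · rw [FF_succ _ _ h]
        set k := p.length - (t+1) with hk
        have hkl : k < p.length := by omega
        obtain ⟨h0, h1⟩ := Ok_getD hp k hkl
        have ho : Ok (p.eraseIdx k) := Ok_sublist hp (List.eraseIdx_sublist p k)
        have hl : (p.eraseIdx k).length ≤ N := by
          rw [List.length_eraseIdx]; simp [hkl]; omega
        have n1 := ih t _ hl ho
        have n2 := ih (t+1) _ hl ho
        nlinarith

lemma prod_nonneg' : ∀ (l : List ℝ), (∀ x ∈ l, 0 ≤ x) → 0 ≤ l.prod := by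
  intro l
  induction l with
  | nil => simp
  | cons a l ih =>
    intro h
    simp only [List.prod_cons]
    have := ih (fun x hx => h x (List.mem_cons_of_mem a hx))
    have := h a List.mem_cons_self
    positivity

lemma split_at (l : List ℝ) (k : ℕ) (h : k < l.length) :
    ∃ l₁ x l₂, l = l₁ ++ x :: l₂ ∧ l₁.length = k ∧ l₂.length = l.length - k - 1 := by
  refine ⟨l.take k, l[k], l.drop (k+1), ?_, ?_, ?_⟩
  · rw [← List.drop_eq_getElem_cons h, List.take_append_drop]
  · simp [List.length_take]; omega
  · simp [List.length_drop]; omega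

lemma FF_affine : ∀ (N t : ℕ) (C D : List ℝ) (x : ℝ), C.length + D.length ≤ N →
    FF t (C ++ x :: D)
      = FF t (C ++ (0:ℝ) :: D) + x * (FF t (C ++ (1:ℝ) :: D) - FF t (C ++ (0:ℝ) :: D)) := by
  intro N
  induction N with
  | zero =>
    intro t C D x hN
    match t with
    | 0 => simp
    | (t+1) =>
      have hC : C = [] := by
        cases C with | nil => rfl | cons a C => simp at hN
      have hD : D = [] := by
        cases D with | nil => rfl | cons a D => subst hC; simp at hN
      subst hC; subst hD
      rcases Nat.eq_zero_or_pos t with ht | ht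
      · subst ht
        rw [FF_mid 0 [] x [] rfl, FF_mid 0 [] (0:ℝ) [] rfl, FF_mid 0 [] (1:ℝ) [] rfl]
        ring
      · rw [FF_of_lt _ _ (by simp; omega), FF_of_lt _ _ (by simp; omega),
            FF_of_lt _ _ (by simp; omega)]
        ring
  | succ N ih =>
    intro t C D x hN
    match t with
    | 0 => simp
    | (t+1) =>
      have hlen : ∀ y : ℝ, (C ++ y :: D).length = C.length + D.length + 1 := by
        intro y; simp; omega
      by_cases h : C.length + D.length + 1 < t + 1
      · have hz : ∀ y : ℝ, FF (t+1) (C ++ y :: D) = 0 := fun y =>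
          FF_of_lt _ _ (by rw [hlen]; omega)
        rw [hz, hz, hz]; ring
      · -- pivot index
        set k := C.length + D.length + 1 - (t+1) with hkdef
        have hk : k ≤ C.length + D.length := by omega
        rcases lt_trichotomy k C.length with hkC | hkC | hkC
        · -- pivot inside C
          obtain ⟨C₁, e, C₂, hCeq, hC₁, hC₂⟩ := split_at C k hkC
          have ht' : t = C₂.length + D.length + 1 := by
            have : C.length = C₁.length + C₂.length + 1 := by rw [hCeq]; simp; omega
            omega
          have hre : ∀ y : ℝ, C ++ y :: D = C₁ ++ e :: (C₂ ++ y :: D) := by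
            intro y; rw [hCeq]; simp
          have hmid : ∀ y : ℝ, FF (t+1) (C ++ y :: D)
              = 1 + e * FF t (C₁ ++ (C₂ ++ y :: D)) + (1 - e) * FF (t+1) (C₁ ++ (C₂ ++ y :: D)) := by
            intro y
            rw [hre y, FF_mid t C₁ e (C₂ ++ y :: D) (by simp [ht']; omega)]
          have hassoc : ∀ y : ℝ, C₁ ++ (C₂ ++ y :: D) = (C₁ ++ C₂) ++ y :: D := by
            intro y; simp
          have hlen' : (C₁ ++ C₂).length + D.length ≤ N := by
            have : C.length = C₁.length + C₂.length + 1 := by rw [hCeq]; simp; omega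
            simp; omega
          have e1 := ih t (C₁ ++ C₂) D x hlen'
          have e2 := ih (t+1) (C₁ ++ C₂) D x hlen'
          rw [hmid x, hmid 0, hmid 1, hassoc x, hassoc 0, hassoc 1, e1, e2]
          ring
        · -- pivot at the slot
          have ht' : t = D.length := by omega
          rw [FF_mid t C x D ht', FF_mid t C (0:ℝ) D ht', FF_mid t C (1:ℝ) D ht']
          ring
        · -- pivot inside D
          have hkD : k - C.length - 1 < D.length := by omega
          obtain ⟨D₁, e, D₂, hDeq, hD₁, hD₂⟩ := split_at D (k - C.length - 1) hkD
          have hDlen : D.length = D₁.length + D₂.length + 1 := by rw [hDeq]; simp; omega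
          have hre : ∀ y : ℝ, C ++ y :: D = (C ++ y :: D₁) ++ e :: D₂ := by
            intro y; rw [hDeq]; simp
          have hmid : ∀ y : ℝ, FF (t+1) (C ++ y :: D)
              = 1 + e * FF t ((C ++ y :: D₁) ++ D₂) + (1 - e) * FF (t+1) ((C ++ y :: D₁) ++ D₂) := by
            intro y
            rw [hre y, FF_mid t (C ++ y :: D₁) e D₂ (by omega)]
          have hassoc : ∀ y : ℝ, (C ++ y :: D₁) ++ D₂ = C ++ y :: (D₁ ++ D₂) := by
            intro y; simp
          have hlen' : C.length + (D₁ ++ D₂).length ≤ N := by simp; omega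
          have e1 := ih t C (D₁ ++ D₂) x hlen'
          have e2 := ih (t+1) C (D₁ ++ D₂) x hlen'
          rw [hmid x, hmid 0, hmid 1, hassoc x, hassoc 0, hassoc 1, e1, e2]
          ring

lemma FF_exchange (t : ℕ) (C D : List ℝ) (x y : ℝ) :
    (x * FF t (C ++ y :: D) + (1-x) * FF (t+1) (C ++ y :: D))
      - (y * FF t (C ++ x :: D) + (1-y) * FF (t+1) (C ++ x :: D))
    = (x - y) * (FF t (C ++ (0:ℝ) :: D) - FF (t+1) (C ++ (1:ℝ) :: D)) := by
  rw [FF_affine (C.length + D.length) t C D x le_rfl,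
      FF_affine (C.length + D.length) t C D y le_rfl,
      FF_affine (C.length + D.length) (t+1) C D x le_rfl,
      FF_affine (C.length + D.length) (t+1) C D y le_rfl]
  ring

lemma FF_CF2 : ∀ (A B : List ℝ),
    FF (B.length + 2) (A ++ (1:ℝ) :: B)
      = 1 + FF (B.length + 1) (A ++ B) - (A.map (fun a => 1 - a)).prod := by
  intro A
  induction A using List.reverseRecOn with
  | nil =>
    intro B
    rw [FF_of_lt _ _ (by simp), FF_of_lt _ _ (by simp)]
    simp
  | append_singleton A' b ih =>
    intro B
    have h1 : (A' ++ [b]) ++ (1:ℝ) :: B = A' ++ b :: ((1:ℝ) :: B) := by simp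
    have h2 : (A' ++ [b]) ++ B = A' ++ b :: B := by simp
    rw [h1, h2]
    rw [show B.length + 2 = (B.length + 1) + 1 from rfl,
        FF_mid (B.length+1) A' b ((1:ℝ) :: B) (by simp)]
    rw [FF_mid B.length A' b B rfl]
    have h3 : A' ++ (1:ℝ) :: B = A' ++ (1:ℝ) :: B := rfl
    rw [FF_mid B.length A' (1:ℝ) B rfl]
    have h4 := ih B
    rw [h4]
    simp only [List.map_append, List.prod_append, List.map_cons, List.map_nil,
      List.prod_cons, List.prod_nil]
    ring

lemma FF_CF3 : ∀ (B A : List ℝ),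
    FF B.length (A ++ (0:ℝ) :: B) = 1 + FF B.length (A ++ B) - B.prod := by
  intro B
  induction B with
  | nil =>
    intro A; simp
  | cons c B' ih =>
    intro A
    have h1 : A ++ (0:ℝ) :: c :: B' = (A ++ [(0:ℝ)]) ++ c :: B' := by simp
    rw [show (c :: B').length = B'.length + 1 from rfl]
    rw [h1, FF_mid B'.length (A ++ [(0:ℝ)]) c B' rfl]
    have h2 : (A ++ [(0:ℝ)]) ++ B' = A ++ (0:ℝ) :: B' := by simp
    rw [h2, ih A]
    rw [FF_mid B'.length A (0:ℝ) B' rfl]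
    rw [FF_mid B'.length A c B' rfl]
    simp only [List.prod_cons]
    ring

lemma Ok_cons {x : ℝ} {l : List ℝ} (hx : 0 ≤ x ∧ x ≤ 1) (h : Ok l) : Ok (x :: l) := by
  intro y hy
  rcases List.mem_cons.mp hy with rfl | hy
  · exact hx
  · exact h y hy

lemma Ok_append {X Y : List ℝ} (h1 : Ok X) (h2 : Ok Y) : Ok (X ++ Y) := by
  intro y hy
  rcases List.mem_append.mp hy with hy | hy
  · exact h1 y hy
  · exact h2 y hy

lemma pair_mid {A₁ A₂ : List ℝ} {b a : ℝ} (h : (A₁ ++ b :: a :: A₂).Pairwise (· ≤ ·)) :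
    b ≤ a := by
  have h2 := (List.pairwise_append.mp h).2.1
  exact (List.pairwise_cons.mp h2).1 a (by simp)

lemma FF_La : ∀ (N : ℕ) (A B : List ℝ) (t : ℕ),
    A.length + B.length ≤ N → Ok (A ++ B) → A.Pairwise (· ≤ ·) → B.length + 1 ≤ t →
    FF (t+1) (A ++ (1:ℝ) :: B) ≤ FF t (A ++ (0:ℝ) :: B) := by
  intro N
  induction N with
  | zero =>
    intro A B t hN hok hpw ht
    have hA : A = [] := by cases A with | nil => rfl | cons a A => simp at hN
    have hB : B = [] := by subst hA; cases B with | nil => rfl | cons a B => simp at hN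
    subst hA; subst hB
    rw [FF_of_lt _ _ (by simp; omega)]
    exact FF_nonneg 1 t _ (by simp) (Ok_append (fun x hx => by simp at hx)
      (Ok_cons ⟨le_refl 0, zero_le_one⟩ (fun x hx => by simp at hx)))
  | succ N ih =>
    intro A B t hN hok hpw ht
    have hokA : Ok A := Ok_append_left hok
    have hokB : Ok B := Ok_append_right hok
    have hok0 : Ok (A ++ (0:ℝ) :: B) := Ok_append hokA (Ok_cons (by norm_num) hokB)
    have hok1 : Ok (A ++ (1:ℝ) :: B) := Ok_append hokA (Ok_cons (by norm_num) hokB)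
    by_cases hbig : A.length + B.length + 1 < t + 1
    · rw [FF_of_lt _ _ (by simp; omega)]
      exact FF_nonneg (A.length + B.length + 1) t _ (by simp; omega) hok0
    · by_cases hbd : t = B.length + 1
      · subst hbd
        rw [show B.length + 1 + 1 = B.length + 2 from rfl, FF_CF2 A B]
        rw [FF_mid B.length A (0:ℝ) B rfl]
        have hprod : 0 ≤ (A.map (fun a => 1 - a)).prod := by
          apply prod_nonneg'
          intro x hx
          obtain ⟨a, ha, rfl⟩ := List.mem_map.mp hx
          have := hokA a ha
          linarith [this.2]
        linarith
      · -- main recursive case : B.length + 2 ≤ t ≤ A.length + B.length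
        have ht2 : B.length + 2 ≤ t := by omega
        have htn : t ≤ A.length + B.length := by omega
        obtain ⟨u, rfl⟩ : ∃ u, t = u + 1 := ⟨t - 1, by omega⟩
        set k₁ := A.length + B.length - u with hk₁
        have hk₁1 : 1 ≤ k₁ := by omega
        have hk₁A : k₁ + 1 ≤ A.length := by omega
        obtain ⟨A₁, b, A₂', hAeq, hA₁len, _⟩ := split_at A (k₁ - 1) (by omega)
        have hA₂' : A₂'.length = A.length - k₁ := by
          have : A.length = A₁.length + A₂'.length + 1 := by rw [hAeq]; simp; omega
          omega
        obtain ⟨a, A₂, rfl⟩ : ∃ a A₂, A₂' = a :: A₂ := by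
          cases A₂' with
          | nil => exfalso; simp at hA₂'; omega
          | cons a A₂ => exact ⟨a, A₂, rfl⟩
        have hA₂len : A₂.length = A.length - k₁ - 1 := by simp at hA₂'; omega
        subst hAeq
        have hlA : A₁.length = k₁ - 1 := hA₁len
        -- memberships and order
    

        have hba : b ≤ a := pair_mid hpw
        have hain : a ∈ A₁ ++ b :: a :: A₂ := by simp
        have hbin : b ∈ A₁ ++ b :: a :: A₂ := by simp
        obtain ⟨ha0, ha1⟩ := hokA a hain
        obtain ⟨hb0, hb1⟩ := hokA b hbin
        -- expansion of v0
        have e0 : (A₁ ++ b :: a :: A₂) ++ (0:ℝ) :: B = (A₁ ++ [b]) ++ a :: (A₂ ++ (0:ℝ) :: B) := by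
          simp
        have hu : u = (A₂ ++ (0:ℝ) :: B).length := by simp; omega
        have exp0 : FF (u+1) ((A₁ ++ b :: a :: A₂) ++ (0:ℝ) :: B)
            = 1 + a * FF u ((A₁ ++ b :: A₂) ++ (0:ℝ) :: B)
              + (1-a) * FF (u+1) ((A₁ ++ b :: A₂) ++ (0:ℝ) :: B) := by
          rw [e0, FF_mid u (A₁ ++ [b]) a (A₂ ++ (0:ℝ) :: B) hu]
          simp
        -- expansion of v1
        have e1 : (A₁ ++ b :: a :: A₂) ++ (1:ℝ) :: B = A₁ ++ b :: (a :: A₂ ++ (1:ℝ) :: B) := by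
          simp
        have hu1 : u + 1 = (a :: A₂ ++ (1:ℝ) :: B).length := by simp; omega
        have exp1 : FF (u+1+1) ((A₁ ++ b :: a :: A₂) ++ (1:ℝ) :: B)
            = 1 + b * FF (u+1) ((A₁ ++ a :: A₂) ++ (1:ℝ) :: B)
              + (1-b) * FF (u+1+1) ((A₁ ++ a :: A₂) ++ (1:ℝ) :: B) := by
          rw [e1, FF_mid (u+1) A₁ b (a :: A₂ ++ (1:ℝ) :: B) hu1]
          simp
        -- IH : lower the v0 bracket
        have hokY : Ok ((A₁ ++ b :: A₂) ++ B) := by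
          apply Ok_append _ hokB
          exact Ok_sublist hokA (by
            apply List.Sublist.append_left
            exact List.Sublist.cons₂ b (List.sublist_cons_self a A₂))
        have hpwY : (A₁ ++ b :: A₂).Pairwise (· ≤ ·) := by
          apply List.Pairwise.sublist _ hpw
          apply List.Sublist.append_left
          exact List.Sublist.cons₂ b (List.sublist_cons_self a A₂)
        have hlenY : (A₁ ++ b :: A₂).length + B.length ≤ N := by simp; omega
        have ih1 := ih (A₁ ++ b :: A₂) B u hlenY hokY hpwY (by omega)
        have ih2 := ih (A₁ ++ b :: A₂) B (u+1) hlenY hokY hpwY (by omega)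
        -- exchange step
        have hexch := FF_exchange (u+1) A₁ (A₂ ++ (1:ℝ) :: B) a b
        have hassoc1 : A₁ ++ b :: (A₂ ++ (1:ℝ) :: B) = (A₁ ++ b :: A₂) ++ (1:ℝ) :: B := by simp
        have hassoc2 : A₁ ++ a :: (A₂ ++ (1:ℝ) :: B) = (A₁ ++ a :: A₂) ++ (1:ℝ) :: B := by simp
        rw [hassoc1, hassoc2] at hexch
        -- inner sign via IH at the boundary
        have hokInner : Ok (A₁ ++ (A₂ ++ (1:ℝ) :: B)) := by
          refine Ok_append ?_ (Ok_append ?_ (Ok_cons (by norm_num) hokB))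
          · exact Ok_sublist hokA (by
              apply List.sublist_append_of_sublist_left
              exact List.Sublist.refl A₁)
          · exact Ok_sublist hokA (by
              apply List.sublist_append_of_sublist_right
              exact (List.sublist_cons_self a A₂).trans (List.sublist_cons_self b _))
        have hpwA₁ : A₁.Pairwise (· ≤ ·) :=
          List.Pairwise.sublist (List.sublist_append_of_sublist_left (List.Sublist.refl A₁)) hpw
        have hlenInner : A₁.length + (A₂ ++ (1:ℝ) :: B).length ≤ N := by simp; omega
        have hinner := ih A₁ (A₂ ++ (1:ℝ) :: B) (u+1) hlenInner hokInner hpwA₁ (by simp; omega)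
        -- assemble
        set P := FF (u+1) ((A₁ ++ a :: A₂) ++ (1:ℝ) :: B) with hP
        set Q := FF (u+1+1) ((A₁ ++ a :: A₂) ++ (1:ℝ) :: B) with hQ
        set R := FF (u+1) ((A₁ ++ b :: A₂) ++ (1:ℝ) :: B) with hR
        set S := FF (u+1+1) ((A₁ ++ b :: A₂) ++ (1:ℝ) :: B) with hS
        set Y₀ := FF u ((A₁ ++ b :: A₂) ++ (0:ℝ) :: B) with hY₀
        set Y₁ := FF (u+1) ((A₁ ++ b :: A₂) ++ (0:ℝ) :: B) with hY₁
        have hinner' : 0 ≤ FF (u+1) (A₁ ++ (0:ℝ) :: (A₂ ++ (1:ℝ) :: B))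
            - FF (u+1+1) (A₁ ++ (1:ℝ) :: (A₂ ++ (1:ℝ) :: B)) := by linarith
        rw [exp0, exp1]
        have hex : (b * P + (1-b) * Q) ≤ (a * R + (1-a) * S) := by nlinarith
        have h1 : a * R ≤ a * Y₀ := mul_le_mul_of_nonneg_left ih1 ha0
        have h2 : (1-a) * S ≤ (1-a) * Y₁ := mul_le_mul_of_nonneg_left ih2 (by linarith)
        linarith

lemma FF_Lb : ∀ (N : ℕ) (A B : List ℝ) (t : ℕ),
    A.length + B.length ≤ N → Ok (A ++ B) → B.Pairwise (· ≤ ·) → t ≤ B.length →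
    FF t (A ++ (0:ℝ) :: B) ≤ FF (t+1) (A ++ (1:ℝ) :: B) := by
  intro N
  induction N with
  | zero =>
    intro A B t hN hok hpw ht
    have ht0 : t = 0 := by omega
    subst ht0
    rw [FF_zero]
    refine FF_nonneg ((A ++ (1:ℝ) :: B).length) 1 _ le_rfl ?_
    exact Ok_append (Ok_append_left hok) (Ok_cons (by norm_num) (Ok_append_right hok))
  | succ N ih =>
    intro A B t hN hok hpw ht
    have hokA : Ok A := Ok_append_left hok
    have hokB : Ok B := Ok_append_right hok
    have hok1 : Ok (A ++ (1:ℝ) :: B) := Ok_append hokA (Ok_cons (by norm_num) hokB)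
    rcases Nat.eq_zero_or_pos t with ht0 | ht1
    · subst ht0
      rw [FF_zero]
      exact FF_nonneg ((A ++ (1:ℝ) :: B).length) 1 _ le_rfl hok1
    · by_cases hbd : t = B.length
      · subst hbd
        rw [FF_CF3 B A, FF_mid B.length A (1:ℝ) B rfl]
        have hprod : 0 ≤ B.prod := prod_nonneg' B (fun x hx => (hokB x hx).1)
        linarith
      · -- main recursive case : 1 ≤ t ≤ B.length - 1
        have htB : t + 1 ≤ B.length := by omega
        obtain ⟨u, rfl⟩ : ∃ u, t = u + 1 := ⟨t - 1, by omega⟩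
        -- split B at index B.length - (u+1) - 1
        obtain ⟨B₁, γ, B₂', hBeq, hB₁len, _⟩ := split_at B (B.length - u - 2) (by omega)
        have hB₂' : B₂'.length = u + 1 := by
          have : B.length = B₁.length + B₂'.length + 1 := by rw [hBeq]; simp; omega
          omega
        obtain ⟨β, B₂, rfl⟩ : ∃ β B₂, B₂' = β :: B₂ := by
          cases B₂' with
          | nil => exfalso; simp at hB₂'
          | cons β B₂ => exact ⟨β, B₂, rfl⟩
        have hB₂len : B₂.length = u := by simp at hB₂'; omega
        subst hBeq
        have hγβ : γ ≤ β := pair_mid hpw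
        have hβin : β ∈ B₁ ++ γ :: β :: B₂ := by simp
        have hγin : γ ∈ B₁ ++ γ :: β :: B₂ := by simp
        obtain ⟨hβ0, hβ1⟩ := hokB β hβin
        obtain ⟨hγ0, hγ1⟩ := hokB γ hγin
        -- expansion of v0
        have e0 : A ++ (0:ℝ) :: (B₁ ++ γ :: β :: B₂)
            = (A ++ (0:ℝ) :: B₁ ++ [γ]) ++ β :: B₂ := by simp
        have exp0 : FF (u+1) (A ++ (0:ℝ) :: (B₁ ++ γ :: β :: B₂))
            = 1 + β * FF u ((A ++ (0:ℝ) :: B₁) ++ γ :: B₂)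
              + (1-β) * FF (u+1) ((A ++ (0:ℝ) :: B₁) ++ γ :: B₂) := by
          rw [e0, FF_mid u (A ++ (0:ℝ) :: B₁ ++ [γ]) β B₂ hB₂len.symm]
          simp
        -- expansion of v1
        have e1 : A ++ (1:ℝ) :: (B₁ ++ γ :: β :: B₂)
            = (A ++ (1:ℝ) :: B₁) ++ γ :: (β :: B₂) := by simp
        have exp1 : FF (u+1+1) (A ++ (1:ℝ) :: (B₁ ++ γ :: β :: B₂))
            = 1 + γ * FF (u+1) (A ++ (1:ℝ) :: (B₁ ++ β :: B₂))
              + (1-γ) * FF (u+1+1) (A ++ (1:ℝ) :: (B₁ ++ β :: B₂)) := by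
          rw [e1, FF_mid (u+1) (A ++ (1:ℝ) :: B₁) γ (β :: B₂) (by simp; omega)]
          simp
        -- IH : raise the v1 bracket
        have hokY : Ok (A ++ (B₁ ++ β :: B₂)) := by
          refine Ok_append hokA (Ok_sublist hokB ?_)
          apply List.Sublist.append_left
          exact (List.sublist_cons_self γ _)
        have hpwY : (B₁ ++ β :: B₂).Pairwise (· ≤ ·) := by
          refine List.Pairwise.sublist ?_ hpw
          apply List.Sublist.append_left
          exact (List.sublist_cons_self γ _)
        have hlenY : A.length + (B₁ ++ β :: B₂).length ≤ N := by simp; omega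
        have ih1 := ih A (B₁ ++ β :: B₂) u hlenY hokY hpwY (by simp; omega)
        have ih2 := ih A (B₁ ++ β :: B₂) (u+1) hlenY hokY hpwY (by simp; omega)
        -- exchange step
        have hexch := FF_exchange u (A ++ (0:ℝ) :: B₁) B₂ β γ
        -- inner sign via IH at the boundary
        have hokInner : Ok ((A ++ (0:ℝ) :: B₁) ++ B₂) := by
          refine Ok_append (Ok_append hokA (Ok_cons (by norm_num) ?_)) ?_
          · exact Ok_sublist hokB (List.sublist_append_left _ _)
          · exact Ok_sublist hokB (by
              apply List.sublist_append_of_sublist_right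
              exact (List.sublist_cons_self β B₂).trans (List.sublist_cons_self γ _))
        have hpwB₂ : B₂.Pairwise (· ≤ ·) := by
          refine List.Pairwise.sublist ?_ hpw
          apply List.sublist_append_of_sublist_right
          exact (List.sublist_cons_self β B₂).trans (List.sublist_cons_self γ _)
        have hlenInner : (A ++ (0:ℝ) :: B₁).length + B₂.length ≤ N := by simp; omega
        have hinner := ih (A ++ (0:ℝ) :: B₁) B₂ u hlenInner hokInner hpwB₂ (by omega)
        -- assemble
        have hre1 : (A ++ (0:ℝ) :: B₁) ++ β :: B₂ = A ++ (0:ℝ) :: (B₁ ++ β :: B₂) := by simp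
        have hre2 : A ++ (1:ℝ) :: (B₁ ++ β :: B₂) = A ++ (1:ℝ) :: (B₁ ++ β :: B₂) := rfl
        rw [exp0, exp1]
        set P := FF u ((A ++ (0:ℝ) :: B₁) ++ γ :: B₂) with hP
        set Q := FF (u+1) ((A ++ (0:ℝ) :: B₁) ++ γ :: B₂) with hQ
        set R := FF u ((A ++ (0:ℝ) :: B₁) ++ β :: B₂) with hR
        set S := FF (u+1) ((A ++ (0:ℝ) :: B₁) ++ β :: B₂) with hS
        set Z₁ := FF (u+1) (A ++ (1:ℝ) :: (B₁ ++ β :: B₂)) with hZ₁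
        set Z₂ := FF (u+1+1) (A ++ (1:ℝ) :: (B₁ ++ β :: B₂)) with hZ₂
        have hRZ : R ≤ Z₁ := by rw [hR, hZ₁, hre1]; exact ih1
        have hSZ : S ≤ Z₂ := by rw [hS, hZ₂, hre1]; exact ih2
        have hex : (β * P + (1-β) * Q) ≤ (γ * R + (1-γ) * S) := by nlinarith
        have h1 : γ * R ≤ γ * Z₁ := mul_le_mul_of_nonneg_left hRZ hγ0
        have h2 : (1-γ) * S ≤ (1-γ) * Z₂ := mul_le_mul_of_nonneg_left hSZ (by linarith)
        linarith

lemma FF_main_up : ∀ (N : ℕ) (P S : List ℝ) (x : ℝ) (t : ℕ), P.length ≤ N →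
    Ok (P ++ x :: S) → (P ++ x :: S).Pairwise (· ≤ ·) → S.length ≤ t →
    t + 1 ≤ P.length + S.length + 1 →
    FF (t+1) (P ++ x :: S) ≤ 1 + x * FF t (P ++ S) + (1-x) * FF (t+1) (P ++ S) := by
  intro N
  induction N with
  | zero =>
    intro P S x t hN hok hpw hts htn
    have hP : P = [] := by cases P with | nil => rfl | cons a P => simp at hN
    subst hP
    have ht : t = S.length := by simp at htn; omega
    subst ht
    exact le_of_eq (FF_mid S.length [] x S rfl)
  | succ N ih =>
    intro P S x t hN hok hpw hts htn
    by_cases hbd : t = S.length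
    · subst hbd
      exact le_of_eq (FF_mid S.length P x S rfl)
    · have hts' : S.length + 1 ≤ t := by omega
      rcases P.eq_nil_or_concat with rfl | ⟨P', w, rfl⟩
      · simp at htn; omega
      · rw [List.concat_eq_append] at *
        have hre : (P' ++ [w]) ++ x :: S = P' ++ w :: (x :: S) := by simp
        have hre2 : (P' ++ [w]) ++ S = P' ++ w :: S := by simp
        rw [hre, hre2]
        have hok' : Ok (P' ++ w :: x :: S) := by rw [← hre]; exact hok
        have hpw' : (P' ++ w :: x :: S).Pairwise (· ≤ ·) := by rw [← hre]; exact hpw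
        have step1 := ih P' (x :: S) w t (by simp at hN ⊢; omega) hok' hpw'
          (by simp; omega) (by simp at htn ⊢; omega)
        have hwx : w ≤ x := pair_mid hpw'
        have hexch := FF_exchange t P' S x w
        have hokP'S : Ok (P' ++ S) := by
          refine Ok_append ?_ ?_
          · exact Ok_sublist hok' (List.sublist_append_of_sublist_left (List.Sublist.refl P'))
          · refine Ok_sublist hok' (List.sublist_append_of_sublist_right ?_)
            exact (List.sublist_cons_self x S).trans (List.sublist_cons_self w _)
        have hpwP' : P'.Pairwise (· ≤ ·) :=
          List.Pairwise.sublist (List.sublist_append_of_sublist_left (List.Sublist.refl P')) hpw'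
        have hLa := FF_La (P'.length + S.length) P' S t le_rfl hokP'S hpwP' hts'
        have hinner : 0 ≤ FF t (P' ++ (0:ℝ) :: S) - FF (t+1) (P' ++ (1:ℝ) :: S) := by linarith
        have hP'S : P' ++ (x :: S) = P' ++ x :: S := rfl
        rw [hP'S] at step1
        nlinarith [step1, hexch, hinner, hwx]

lemma FF_main_down : ∀ (N : ℕ) (P S : List ℝ) (x : ℝ) (t : ℕ), S.length ≤ N →
    Ok (P ++ x :: S) → (P ++ x :: S).Pairwise (· ≤ ·) → t ≤ S.length →
    FF (t+1) (P ++ x :: S) ≤ 1 + x * FF t (P ++ S) + (1-x) * FF (t+1) (P ++ S) := by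
  intro N
  induction N with
  | zero =>
    intro P S x t hN hok hpw hts
    have hS : S = [] := by cases S with | nil => rfl | cons a S => simp at hN
    subst hS
    have ht : t = 0 := by simp at hts; omega
    subst ht
    exact le_of_eq (FF_mid 0 P x [] rfl)
  | succ N ih =>
    intro P S x t hN hok hpw hts
    by_cases hbd : t = S.length
    · subst hbd
      exact le_of_eq (FF_mid S.length P x S rfl)
    · have hts' : t + 1 ≤ S.length := by omega
      rcases S with _ | ⟨w, S'⟩
      · simp at hts'
      · have hre : P ++ x :: w :: S' = (P ++ [x]) ++ w :: S' := by simp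
        have hre2 : (P ++ [x]) ++ S' = P ++ x :: S' := by simp
        have hok' : Ok ((P ++ [x]) ++ w :: S') := by rw [← hre]; exact hok
        have hpw' : ((P ++ [x]) ++ w :: S').Pairwise (· ≤ ·) := by rw [← hre]; exact hpw
        have step1 := ih (P ++ [x]) S' w t (by simp at hN ⊢; omega) hok' hpw'
          (by simp at hts' ⊢; omega)
        rw [hre2] at step1
        rw [hre]
        have hxw : x ≤ w := pair_mid hpw
        have hexch := FF_exchange t P S' x w
        have hokPS' : Ok (P ++ S') := by
          refine Ok_append ?_ ?_
          · exact Ok_sublist hok (List.sublist_append_of_sublist_left (List.Sublist.refl P))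
          · refine Ok_sublist hok (List.sublist_append_of_sublist_right ?_)
            exact ((List.sublist_cons_self w S').trans (List.sublist_cons_self x _))
        have hpwS' : S'.Pairwise (· ≤ ·) := by
          refine List.Pairwise.sublist ?_ hpw
          refine List.sublist_append_of_sublist_right ?_
          exact ((List.sublist_cons_self w S').trans (List.sublist_cons_self x _))
        have hLb := FF_Lb (P.length + S'.length) P S' t le_rfl hokPS' hpwS' (by simp at hts'; omega)
        have hinner : FF t (P ++ (0:ℝ) :: S') - FF (t+1) (P ++ (1:ℝ) :: S') ≤ 0 := by linarith
        nlinarith [step1, hexch, hinner, hxw]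

lemma FF_main (P S : List ℝ) (x : ℝ) (t : ℕ)
    (hok : Ok (P ++ x :: S)) (hpw : (P ++ x :: S).Pairwise (· ≤ ·))
    (htn : t + 1 ≤ P.length + S.length + 1) :
    FF (t+1) (P ++ x :: S) ≤ 1 + x * FF t (P ++ S) + (1-x) * FF (t+1) (P ++ S) := by
  rcases le_or_gt t S.length with h | h
  · exact FF_main_down S.length P S x t le_rfl hok hpw h
  · exact FF_main_up P.length P S x t le_rfl hok hpw (by omega) htn

lemma cost_eq_FF : ∀ (N : ℕ) (q : List ℝ), q.length ≤ N → Ok q → q.Pairwise (· ≤ ·) →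
    ∀ θ, cost (fun _ => 1) θ q = FF θ q := by
  intro N
  induction N with
  | zero =>
    intro q hN hok hpw θ
    match θ with
    | 0 => rw [cost, FF_zero]
    | (θ+1) =>
      rw [cost, FF_of_lt _ _ (by omega)]
      rw [if_pos (by omega)]
  | succ N ih =>
    intro q hN hok hpw θ
    match θ with
    | 0 => rw [cost, FF_zero]
    | (θ+1) =>
      by_cases h : q.length < θ + 1
      · rw [cost, FF_of_lt _ _ h, if_pos h]
      · rw [cost, if_neg h]
        have hne : Nonempty (Fin q.length) := ⟨⟨0, by omega⟩⟩
        have hcongr : ∀ i : Fin q.length,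
            ((fun _ => (1:ℝ)) (q.get i) + q.get i * cost (fun _ => 1) θ (q.eraseIdx i.1)
              + (1 - q.get i) * cost (fun _ => 1) (θ+1) (q.eraseIdx i.1))
            = (1 + q.get i * FF θ (q.eraseIdx i.1)
              + (1 - q.get i) * FF (θ+1) (q.eraseIdx i.1)) := by
          intro i
          have hsub := List.eraseIdx_sublist q i.1
          have hlen : (q.eraseIdx i.1).length ≤ N := by
            rw [List.length_eraseIdx]; simp [i.isLt]; omega
          rw [ih _ hlen (Ok_sublist hok hsub) (List.Pairwise.sublist hsub hpw),
              ih _ hlen (Ok_sublist hok hsub) (List.Pairwise.sublist hsub hpw)]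
        rw [iInf_congr hcongr]
        apply le_antisymm
        · -- inf ≤ pivot value = FF
          have hkq : q.length - (θ+1) < q.length := by omega
          have hle := ciInf_le (f := fun i : Fin q.length =>
            (1 + q.get i * FF θ (q.eraseIdx i.1)
              + (1 - q.get i) * FF (θ+1) (q.eraseIdx i.1)))
            (Set.Finite.bddBelow (Set.finite_range _)) ⟨q.length - (θ+1), hkq⟩
          refine le_trans hle ?_
          rw [FF_succ _ _ h]
          have hg : q.get ⟨q.length - (θ+1), hkq⟩ = q.getD (q.length - (θ+1)) 0 := by
            rw [List.get_eq_getElem, List.getD_eq_getElem q 0 hkq]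
          rw [hg]
        · -- FF ≤ every branch
          apply le_ciInf
          intro i
          obtain ⟨P, x, S, hq, hPlen, _⟩ := split_at q i.1 i.isLt
          subst hq
          have hget : (P ++ x :: S).get i = x := by
            rw [List.get_eq_getElem, ← List.getD_eq_getElem _ 0 i.isLt, ← hPlen, getD_mid]
          have herase : (P ++ x :: S).eraseIdx i.1 = P ++ S := by
            rw [← hPlen]; exact erase_mid P x S
          have hlen2 : θ + 1 ≤ P.length + S.length + 1 := by
            simp at h; omega
          have := FF_main P S x θ hok hpw hlen2
          rw [hget, herase]
          exact this


/-- Theorem (single-instance computation of Boolean threshold functions):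
with constant cost `f ≡ 1` (one bit per transmission) and sorted probabilities
`p_1 ≤ … ≤ p_n`, the 1-based index `n - θ + 1` (0-based index `n - θ`) attains
the minimum in the DP recursion for computing `Π_θ`; i.e. to compute
`Π_{n-k}(X_1,…,X_n)` it is optimal for node `k+1` to transmit first. -/
theorem stmt_5 (n : ℕ) (hn : 1 ≤ n) (p : Fin n → ℝ)
    (hp0 : ∀ i, 0 ≤ p i) (hp1 : ∀ i, p i ≤ 1) (hsorted : Monotone p)
    (θ : ℕ) (hθ1 : 1 ≤ θ) (hθn : θ ≤ n) (j : Fin n) :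
    1 + p ⟨n - θ, by omega⟩ *
        cost (fun _ => 1) (θ - 1) ((List.ofFn p).eraseIdx (n - θ))
      + (1 - p ⟨n - θ, by omega⟩) *
        cost (fun _ => 1) θ ((List.ofFn p).eraseIdx (n - θ))
    ≤ 1 + p j * cost (fun _ => 1) (θ - 1) ((List.ofFn p).eraseIdx j)
      + (1 - p j) * cost (fun _ => 1) θ ((List.ofFn p).eraseIdx j) := by
  obtain ⟨t, rfl⟩ : ∃ t, θ = t + 1 := ⟨θ - 1, by omega⟩
  have hlen : (List.ofFn p).length = n := List.length_ofFn
  have hok : Ok (List.ofFn p) := by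
    intro x hx
    obtain ⟨i, rfl⟩ := List.mem_ofFn.mp hx
    exact ⟨hp0 i, hp1 i⟩
  have hpw : (List.ofFn p).Pairwise (· ≤ ·) :=
    List.pairwise_ofFn.mpr (fun i j hij => hsorted (le_of_lt hij))
  have herase_ok : ∀ k : ℕ, Ok ((List.ofFn p).eraseIdx k) :=
    fun k => Ok_sublist hok (List.eraseIdx_sublist _ k)
  have herase_pw : ∀ k : ℕ, ((List.ofFn p).eraseIdx k).Pairwise (· ≤ ·) :=
    fun k => List.Pairwise.sublist (List.eraseIdx_sublist _ k) hpw
  have hcost : ∀ (k θ' : ℕ), cost (fun _ => 1) θ' ((List.ofFn p).eraseIdx k)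
      = FF θ' ((List.ofFn p).eraseIdx k) :=
    fun k θ' => cost_eq_FF ((List.ofFn p).eraseIdx k).length _ le_rfl (herase_ok k)
      (herase_pw k) θ'
  have ht1 : t + 1 - 1 = t := rfl
  rw [ht1, hcost, hcost, hcost, hcost]
  -- LHS is the pivot expansion of FF (t+1) (ofFn p)
  have hnl : ¬ (List.ofFn p).length < t + 1 := by omega
  have hFq := FF_succ t (List.ofFn p) hnl
  have hidx : (List.ofFn p).length - (t+1) = n - (t+1) := by rw [hlen]
  have hkq : n - (t+1) < (List.ofFn p).length := by omega
  have hpget : (List.ofFn p).getD (n - (t+1)) 0 = p ⟨n - (t+1), by omega⟩ := by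
    rw [List.getD_eq_getElem _ 0 hkq, List.getElem_ofFn]
  rw [hidx, hpget] at hFq
  have hL : 1 + p ⟨n - (t+1), by omega⟩ * FF t ((List.ofFn p).eraseIdx (n - (t+1)))
      + (1 - p ⟨n - (t+1), by omega⟩) * FF (t+1) ((List.ofFn p).eraseIdx (n - (t+1)))
      = FF (t+1) (List.ofFn p) := hFq.symm
  rw [hL]
  -- RHS : decompose at j
  have hjlt : j.1 < (List.ofFn p).length := by omega
  obtain ⟨P, x, S, hq, hPlen, _⟩ := split_at (List.ofFn p) j.1 hjlt
  have hjx : p j = x := by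
    have h1 : (List.ofFn p).getD j.1 0 = x := by rw [hq, ← hPlen, getD_mid]
    rw [List.getD_eq_getElem _ 0 hjlt, List.getElem_ofFn] at h1
    rw [← h1]
  have herase_j : (List.ofFn p).eraseIdx j.1 = P ++ S := by
    rw [hq, ← hPlen]; exact erase_mid P x S
  have hokq : Ok (P ++ x :: S) := by rw [← hq]; exact hok
  have hpwq : (P ++ x :: S).Pairwise (· ≤ ·) := by rw [← hq]; exact hpw
  have hlen2 : t + 1 ≤ P.length + S.length + 1 := by
    have : (List.ofFn p).length = P.length + S.length + 1 := by rw [hq]; simp; omega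
    omega
  have hmain := FF_main P S x t hokq hpwq hlen2
  rw [herase_j, hjx]
  calc FF (t+1) (List.ofFn p) = FF (t+1) (P ++ x :: S) := by rw [hq]
    _ ≤ _ := hmain
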